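/- Let $A$ and $B$ be vector spaces over a field $F$ and let $V \subseteq \mathrm{Hom}_F(A,B)$ be a subspace. Then there exists a vector space $Q$ and a linear map $\rho \colon A \to B \otimes Q$ with $V = \{(\mathrm{id}_B\otimes q^*)\circ\rho \mid q^* \in Q^*\}$ if and only if $V$ is pointwise finite dimensional and closed in the finite topology on $\mathrm{Hom}_F(A,B)$. -/

import Mathlib

set_option maxHeartbeats 1600000
set_option synthInstance.maxHeartbeats 400000

open TensorProduct

variable {F : Type*} [Field F] {A : Type uA} {B : Type uB} [AddCommGroup A] [Module F A]
  [AddCommGroup B] [Module F B]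

/-- The linear map `Q^* → Hom(A,B)` sending `q^*` to `(id_B ⊗ q^*) ∘ ρ`. -/
noncomputable def cosuppL {Q : Type*} [AddCommGroup Q] [Module F Q] (ρ : A →ₗ[F] B ⊗[F] Q) :
    Module.Dual F Q →ₗ[F] (A →ₗ[F] B) where
  toFun q := (TensorProduct.rid F B).toLinearMap ∘ₗ LinearMap.lTensor B q ∘ₗ ρ
  map_add' q₁ q₂ := by
    simp [LinearMap.lTensor_add, LinearMap.add_comp, LinearMap.comp_add]
  map_smul' c q := by
    simp [LinearMap.lTensor_smul, LinearMap.smul_comp, LinearMap.comp_smul]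

/-- The cosupport of `ρ : A → B ⊗ Q`. -/
noncomputable def lcosupp {Q : Type*} [AddCommGroup Q] [Module F Q] (ρ : A →ₗ[F] B ⊗[F] Q) :
    Submodule F (A →ₗ[F] B) :=
  LinearMap.range (cosuppL ρ)

/-- The finite topology on `Hom_F(A,B)`: pointwise convergence with `B` discrete. -/
def finiteTopology (F A B : Type*) [Field F] [AddCommGroup A] [Module F A]
    [AddCommGroup B] [Module F B] : TopologicalSpace (A →ₗ[F] B) :=
  TopologicalSpace.induced (fun f : A →ₗ[F] B => (f : A → B))
    (@Pi.topologicalSpace A (fun _ => B) (fun _ => ⊥))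

/-- `t ↦ (q ↦ (id ⊗ q) t)` bundled as linear in `q`. -/
noncomputable def evalTensor {Q : Type*} [AddCommMonoid Q] [Module F Q] (t : B ⊗[F] Q) :
    Module.Dual F Q →ₗ[F] B where
  toFun q := TensorProduct.rid F B (LinearMap.lTensor B q t)
  map_add' q₁ q₂ := by simp [LinearMap.lTensor_add]
  map_smul' c q := by simp [LinearMap.lTensor_smul]

theorem cosuppL_apply {Q : Type*} [AddCommGroup Q] [Module F Q] (ρ : A →ₗ[F] B ⊗[F] Q)
    (q : Module.Dual F Q) (a : A) : (cosuppL ρ q) a = evalTensor (ρ a) q := rfl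

theorem evalTensor_fd {Q : Type*} [AddCommGroup Q] [Module F Q] (t : B ⊗[F] Q) :
    FiniteDimensional F (LinearMap.range (evalTensor (F := F) t)) := by
  induction t with
  | zero =>
      have : evalTensor (F := F) (0 : B ⊗[F] Q) = 0 := by ext q; simp [evalTensor]
      rw [this, LinearMap.range_zero]
      infer_instance
  | tmul b m =>
      have hle : LinearMap.range (evalTensor (F := F) (b ⊗ₜ[F] m)) ≤ Submodule.span F {b} := by
        rintro x ⟨q, rfl⟩
        simp only [evalTensor, LinearMap.coe_mk, AddHom.coe_mk, LinearMap.lTensor_tmul,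
          TensorProduct.rid_tmul]
        exact Submodule.smul_mem _ _ (Submodule.mem_span_singleton_self b)
      exact Submodule.finiteDimensional_of_le hle
  | add x y hx hy =>
      have hle : LinearMap.range (evalTensor (F := F) (x + y)) ≤
          LinearMap.range (evalTensor (F := F) x) ⊔ LinearMap.range (evalTensor (F := F) y) := by
        rintro z ⟨q, rfl⟩
        have : evalTensor (F := F) (x + y) q
            = evalTensor (F := F) x q + evalTensor (F := F) y q := by
          simp [evalTensor]
        rw [this]
        exact Submodule.add_mem_sup ⟨q, rfl⟩ ⟨q, rfl⟩
      exact Submodule.finiteDimensional_of_le hle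

/-- Key coordinate identity. -/
theorem evalTensor_repr {Q : Type*} [AddCommGroup Q] [Module F Q] {ι : Type*}
    (𝔅 : Module.Basis ι F B) (t : B ⊗[F] Q) (q : Module.Dual F Q) (i : ι) :
    𝔅.repr (evalTensor t q) i
      = q (TensorProduct.lid F Q (LinearMap.rTensor Q (𝔅.coord i) t)) := by
  induction t with
  | zero => simp [evalTensor]
  | tmul b m =>
      simp [evalTensor, mul_comm]
  | add x y hx hy =>
      simp only [evalTensor, LinearMap.coe_mk, AddHom.coe_mk] at hx hy ⊢
      simp [map_add, hx, hy]

theorem mem_closure_finiteTopology {S : Set (A →ₗ[F] B)} {f : A →ₗ[F] B} :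
    f ∈ @closure _ (finiteTopology F A B) S ↔
      ∀ s : Finset A, ∃ g ∈ S, ∀ a ∈ s, g a = f a := by
  letI : TopologicalSpace B := ⊥
  haveI : DiscreteTopology B := ⟨rfl⟩
  letI tt : TopologicalSpace (A →ₗ[F] B) := finiteTopology F A B
  rw [mem_closure_iff]
  constructor
  · intro h s
    obtain ⟨g, hgU, hgS⟩ := h ((fun g : A →ₗ[F] B => (g : A → B)) ⁻¹' (Set.pi ↑s fun a => {f a}))
      (isOpen_induced (isOpen_set_pi s.finite_toSet fun a _ => isOpen_discrete _))
      (fun a _ => rfl)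
    exact ⟨g, hgS, fun a ha => hgU a ha⟩
  · intro h o ho hfo
    obtain ⟨U, hU, rfl⟩ := isOpen_induced_iff.mp ho
    obtain ⟨I, u, hu, hsub⟩ := isOpen_pi_iff.mp hU _ hfo
    obtain ⟨g, hgS, hg⟩ := h I
    refine ⟨g, hsub fun a ha => ?_, hgS⟩
    show g a ∈ u a
    rw [hg a ha]
    exact (hu a ha).2

theorem sat_lemma {Q : Type*} [AddCommGroup Q] [Module F Q] {P : Type*}
    (g : P → Q) (c : P → F)
    (h : ∀ t : Finset P, ∃ q : Module.Dual F Q, ∀ p ∈ t, q (g p) = c p) :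
    ∃ q : Module.Dual F Q, ∀ p, q (g p) = c p := by
  classical
  set T := Finsupp.linearCombination F g with hT
  set C := Finsupp.linearCombination F c with hC
  have hker : LinearMap.ker T ≤ LinearMap.ker C := by
    intro l hl
    obtain ⟨q, hq⟩ := h l.support
    have key : C l = q (T l) := by
      rw [hT, hC, Finsupp.linearCombination_apply, Finsupp.linearCombination_apply,
        map_finsuppSum]
      refine Finsupp.sum_congr fun p hp => ?_
      rw [map_smul, hq p hp]
    rw [LinearMap.mem_ker, key, LinearMap.mem_ker.mp hl, map_zero]
  let C' : ((P →₀ F) ⧸ LinearMap.ker T) →ₗ[F] F := Submodule.liftQ _ C hker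
  obtain ⟨q, hq⟩ := LinearMap.exists_extend
    (C' ∘ₗ (T.quotKerEquivRange.symm : LinearMap.range T →ₗ[F] _))
  refine ⟨q, fun p => ?_⟩
  have h1 : T (Finsupp.single p 1) = g p := by simp [hT]
  have hmem : g p ∈ LinearMap.range T := ⟨Finsupp.single p 1, h1⟩
  have h2 : q (g p) = (q ∘ₗ (LinearMap.range T).subtype) ⟨g p, hmem⟩ := rfl
  rw [h2, hq]
  have h3 : (⟨g p, hmem⟩ : LinearMap.range T)
      = ⟨T (Finsupp.single p 1), h1 ▸ hmem⟩ := by simp [h1]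
  rw [LinearMap.comp_apply, h3]
  rw [LinearEquiv.coe_coe, LinearMap.quotKerEquivRange_symm_apply_image]
  show C' (Submodule.Quotient.mk _) = c p
  rw [Submodule.liftQ_apply, hC]
  simp

theorem lcosupp_fd {Q : Type*} [AddCommGroup Q] [Module F Q] (ρ : A →ₗ[F] B ⊗[F] Q) (a : A) :
    FiniteDimensional F ((lcosupp ρ).map
      ((LinearMap.applyₗ : A →ₗ[F] (A →ₗ[F] B) →ₗ[F] B) a)) := by
  have : (lcosupp ρ).map (LinearMap.applyₗ a)
      = LinearMap.range (evalTensor (F := F) (ρ a)) := by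
    rw [lcosupp, ← LinearMap.range_comp]
    congr 1
  rw [this]
  exact evalTensor_fd (ρ a)

theorem lcosupp_closed {Q : Type*} [AddCommGroup Q] [Module F Q] (ρ : A →ₗ[F] B ⊗[F] Q) :
    @IsClosed _ (finiteTopology F A B) ((lcosupp ρ : Submodule F (A →ₗ[F] B)) : Set _) := by
  classical
  have hsub : @closure _ (finiteTopology F A B) ((lcosupp ρ : Submodule F (A →ₗ[F] B)) : Set _)
      ⊆ ((lcosupp ρ : Submodule F (A →ₗ[F] B)) : Set _) := by
    intro f hf
    rw [mem_closure_finiteTopology] at hf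
    set 𝔅 := Module.Basis.ofVectorSpace F B with h𝔅
    have hfin : ∀ t : Finset (A × (Module.Basis.ofVectorSpaceIndex F B)),
        ∃ q : Module.Dual F Q, ∀ p ∈ t,
          q (TensorProduct.lid F Q (LinearMap.rTensor Q (𝔅.coord p.2) (ρ p.1)))
            = 𝔅.repr (f p.1) p.2 := by
      intro t
      obtain ⟨g, hgV, hg⟩ := hf (t.image Prod.fst)
      rw [SetLike.mem_coe, lcosupp, LinearMap.mem_range] at hgV
      obtain ⟨q', rfl⟩ := hgV
      refine ⟨q', fun p hp => ?_⟩
      rw [← evalTensor_repr 𝔅, ← cosuppL_apply, hg p.1 (Finset.mem_image_of_mem _ hp)]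
    obtain ⟨q, hq⟩ := sat_lemma
      (fun p : A × (Module.Basis.ofVectorSpaceIndex F B) =>
        TensorProduct.lid F Q (LinearMap.rTensor Q (𝔅.coord p.2) (ρ p.1)))
      (fun p => 𝔅.repr (f p.1) p.2) hfin
    show f ∈ lcosupp ρ
    refine ⟨q, ?_⟩
    ext a
    apply 𝔅.repr.injective
    ext i
    rw [cosuppL_apply, evalTensor_repr]
    exact hq (a, i)
  letI := finiteTopology F A B
  exact isClosed_of_closure_subset hsub

section eta

variable {M M' : Type*} [AddCommGroup M] [Module F M] [AddCommGroup M'] [Module F M']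

noncomputable def etaH (F : Type*) [Field F] (B M : Type*) [AddCommGroup B] [Module F B]
    [AddCommGroup M] [Module F M] : (B ⊗[F] Module.Dual F M) →ₗ[F] (M →ₗ[F] B) :=
  (dualTensorHom F M B) ∘ₗ (TensorProduct.comm F B (Module.Dual F M)).toLinearMap

@[simp] theorem etaH_tmul (b : B) (lam : Module.Dual F M) (m : M) :
    etaH F B M (b ⊗ₜ[F] lam) m = lam m • b := by
  simp [etaH]

theorem evalTensor_eval (t : B ⊗[F] Module.Dual F M) (m : M) :
    evalTensor t (Module.Dual.eval F M m) = etaH F B M t m := by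
  induction t with
  | zero => simp [evalTensor]
  | tmul b lam => simp [evalTensor]
  | add x y hx hy =>
      simp only [evalTensor, LinearMap.coe_mk, AddHom.coe_mk] at hx hy
      simp [evalTensor, map_add, hx, hy]

theorem evalTensor_lTensor {N N' : Type*} [AddCommMonoid N] [Module F N]
    [AddCommGroup N'] [Module F N'] (g : N →ₗ[F] N') (t : B ⊗[F] N) (q : Module.Dual F N') :
    evalTensor (LinearMap.lTensor B g t) q = evalTensor t (q ∘ₗ g) := by
  induction t with
  | zero => simp [evalTensor]
  | tmul b m => simp [evalTensor]
  | add x y hx hy =>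
      simp only [evalTensor, LinearMap.coe_mk, AddHom.coe_mk] at hx hy ⊢
      simp [map_add, hx, hy]

/-- coordinate projection of `B ⊗ M` along a basis of `B`. -/
noncomputable def coordT {ι : Type*} (𝔅 : Module.Basis ι F B) (i : ι) : (B ⊗[F] M) →ₗ[F] M :=
  (TensorProduct.lid F M).toLinearMap ∘ₗ LinearMap.rTensor M (𝔅.coord i)

theorem coordT_eq_zero {ι : Type*} (𝔅 : Module.Basis ι F B) (t : B ⊗[F] M)
    (h : ∀ i, coordT 𝔅 i t = 0) : t = 0 := by
  classical
  set E := (TensorProduct.congr 𝔅.repr (LinearEquiv.refl F M)).trans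
    (TensorProduct.finsuppScalarLeft F M ι) with hE
  have key : ∀ (t : B ⊗[F] M) (i : ι), coordT 𝔅 i t = E t i := by
    intro t i
    induction t with
    | zero => simp [coordT]
    | tmul b m =>
        simp [coordT, hE, TensorProduct.finsuppScalarLeft_apply_tmul_apply]
    | add x y hx hy => simp [coordT, map_add, Finsupp.add_apply] at hx hy ⊢; rw [hx, hy]
  have hE0 : E t = 0 := by
    ext i
    rw [← key t i]
    exact h i
  exact E.map_eq_zero_iff.mp hE0

theorem repr_etaH {ι : Type*} (𝔅 : Module.Basis ι F B) (t : B ⊗[F] Module.Dual F M) (m : M) (i : ι) :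
    𝔅.repr (etaH F B M t m) i = coordT 𝔅 i t m := by
  induction t with
  | zero => simp
  | tmul b lam => simp [coordT, mul_comm]
  | add x y hx hy => simp [coordT, map_add, Finsupp.add_apply] at hx hy ⊢; rw [hx, hy]

theorem etaH_injective : Function.Injective (etaH F B M) := by
  rw [injective_iff_map_eq_zero]
  intro t ht
  refine coordT_eq_zero (Module.Basis.ofVectorSpace F B) t fun i => ?_
  ext m
  rw [← repr_etaH, ht]
  simp

/-- surjectivity of the evaluation map onto the dual of a f.d. subspace of the dual. -/
theorem eval_restrict_surjective (L : Submodule F (Module.Dual F M)) [FiniteDimensional F L]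
    (xi : Module.Dual F L) : ∃ m : M, ∀ lam : Module.Dual F M, ∀ h : lam ∈ L,
      lam m = xi ⟨lam, h⟩ := by
  set Phi : M →ₗ[F] Module.Dual F L := L.subtype.dualMap ∘ₗ Module.Dual.eval F M with hPhi
  have hsurj : LinearMap.range Phi = ⊤ := by
    by_contra hne
    obtain ⟨f, hf0, hker⟩ := Submodule.exists_le_ker_of_lt_top _ (lt_top_iff_ne_top.mpr hne)
    haveI : Module.Free F L := Module.Free.of_divisionRing F L
    haveI : Module.IsReflexive F L := Module.IsReflexive.of_finite_of_free F L
    obtain ⟨lam0, rfl⟩ := (Module.evalEquiv F L).surjective f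
    have : lam0 = 0 := by
      have h1 : ∀ m : M, (lam0 : Module.Dual F M) m = 0 := by
        intro m
        have := hker (LinearMap.mem_range_self Phi m)
        rw [LinearMap.mem_ker] at this
        simpa [hPhi, Module.evalEquiv_toLinearMap] using this
      ext m
      exact h1 m
    rw [this, map_zero] at hf0
    exact hf0 rfl
  obtain ⟨m, hm⟩ := LinearMap.range_eq_top.mp hsurj xi
  refine ⟨m, fun lam h => ?_⟩
  have := congrArg (fun g => g ⟨lam, h⟩) hm
  simpa [hPhi] using this

end eta

section reverse

theorem exists_lcosupp_eq (V : Submodule F (A →ₗ[F] B))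
    [Small.{w} (Module.Dual F ↥V)]
    (hfd : ∀ a : A, FiniteDimensional F
      (V.map ((LinearMap.applyₗ : A →ₗ[F] (A →ₗ[F] B) →ₗ[F] B) a)))
    (hcl : @IsClosed _ (finiteTopology F A B) (V : Set (A →ₗ[F] B))) :
    ∃ ρ : A →ₗ[F] B ⊗[F] (Shrink.{w} (Module.Dual F ↥V)), lcosupp ρ = V := by
  classical
  set η := etaH F B ↥V with hη'
  set Ev : A →ₗ[F] (↥V →ₗ[F] B) := (V.subtype).flip with hEv
  have hmem : ∀ a : A, Ev a ∈ LinearMap.range η := by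
    intro a
    haveI : FiniteDimensional F (LinearMap.range (Ev a)) := by
      have he : Ev a = (LinearMap.applyₗ a) ∘ₗ V.subtype := rfl
      rw [he, LinearMap.range_comp, Submodule.range_subtype]
      exact hfd a
    set W := LinearMap.range (Ev a) with hW
    set w := Module.finBasis F W with hw
    set r : ↥V →ₗ[F] W := LinearMap.codRestrict W (Ev a)
      (fun v => LinearMap.mem_range_self _ v) with hr
    refine ⟨∑ i, ((w i : B) ⊗ₜ[F] (w.coord i ∘ₗ r)), ?_⟩
    ext v
    rw [map_sum, LinearMap.sum_apply]
    set x : W := ⟨Ev a v, LinearMap.mem_range_self _ v⟩ with hx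
    have step1 : ∀ i, (η ((w i : B) ⊗ₜ[F] (w.coord i ∘ₗ r))) v = (w.repr x) i • ((w i : W) : B) := by
      intro i
      rw [hη', etaH_tmul]
      congr 1
    rw [Finset.sum_congr rfl fun i _ => step1 i]
    have step2 : ∑ i, (w.repr x) i • ((w i : W) : B) = W.subtype (∑ i, (w.repr x) i • w i) := by
      rw [map_sum]
      simp
    rw [step2, w.sum_repr x]
    rfl
  set e := LinearEquiv.ofInjective η (etaH_injective) with he
  set ρ₀ : A →ₗ[F] B ⊗[F] Module.Dual F ↥V :=
    (e.symm : LinearMap.range η →ₗ[F] _) ∘ₗ LinearMap.codRestrict (LinearMap.range η) Ev hmem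
    with hρ₀
  have hη : ∀ a : A, η (ρ₀ a) = Ev a := by
    intro a
    have h1 : e (ρ₀ a) = ⟨Ev a, hmem a⟩ := e.apply_symm_apply _
    have h2 : η (ρ₀ a) = ((e (ρ₀ a) : LinearMap.range η) : ↥V →ₗ[F] B) := by
      rw [he]
      exact (LinearEquiv.ofInjective_apply _ _).symm
    rw [h2, h1]
  set ε := Shrink.linearEquiv F (Module.Dual F ↥V) with hε
  set ρ : A →ₗ[F] B ⊗[F] (Shrink.{w} (Module.Dual F ↥V)) :=
    (LinearMap.lTensor B (ε.symm : Module.Dual F ↥V →ₗ[F] _)) ∘ₗ ρ₀ with hρ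
  have hρa : ∀ a : A, ρ a = LinearMap.lTensor B
      (ε.symm : Module.Dual F ↥V →ₗ[F] Shrink.{w} (Module.Dual F ↥V)) (ρ₀ a) := fun a => rfl
  refine ⟨ρ, le_antisymm ?_ ?_⟩
  · rintro f ⟨q, rfl⟩
    have hclos : cosuppL ρ q ∈ @closure _ (finiteTopology F A B) (V : Set (A →ₗ[F] B)) := by
      rw [mem_closure_finiteTopology]
      intro s
      obtain ⟨L, hLfin, hLsub⟩ := TensorProduct.exists_finite_submodule_right_of_setFinite
        ((fun a => ρ₀ a) '' ↑s) ((s.finite_toSet).image _)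
      haveI : FiniteDimensional F L := hLfin
      set μ : Module.Dual F (Module.Dual F ↥V) :=
        q ∘ₗ (ε.symm : Module.Dual F ↥V →ₗ[F] Shrink.{w} (Module.Dual F ↥V)) with hμ
      obtain ⟨v, hv⟩ := eval_restrict_surjective L (μ ∘ₗ L.subtype)
      refine ⟨(v : A →ₗ[F] B), v.2, fun a ha => ?_⟩
      have h1 : (v : A →ₗ[F] B) a = evalTensor (ρ₀ a) (Module.Dual.eval F ↥V v) := by
        rw [evalTensor_eval, hη a]
        rfl
      have h2 : cosuppL ρ q a = evalTensor (ρ₀ a) μ := by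
        rw [cosuppL_apply, hρa a, evalTensor_lTensor, ← hμ]
      obtain ⟨t₀, ht₀⟩ := hLsub (Set.mem_image_of_mem _ ha)
      have ht₀' : (LinearMap.lTensor B L.subtype) t₀ = ρ₀ a := ht₀
      rw [h1, h2, ← ht₀', evalTensor_lTensor, evalTensor_lTensor]
      congr 1
      ext ⟨lam, hlam⟩
      simpa using hv lam hlam
    letI : TopologicalSpace (A →ₗ[F] B) := finiteTopology F A B
    exact hcl.closure_subset hclos
  · intro f hf
    refine ⟨(Module.Dual.eval F ↥V ⟨f, hf⟩)
      ∘ₗ (ε : Shrink.{w} (Module.Dual F ↥V) →ₗ[F] Module.Dual F ↥V), ?_⟩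
    ext a
    rw [cosuppL_apply, hρa a, evalTensor_lTensor]
    have hcomp : ((Module.Dual.eval F ↥V ⟨f, hf⟩)
          ∘ₗ (ε : Shrink.{w} (Module.Dual F ↥V) →ₗ[F] Module.Dual F ↥V))
        ∘ₗ (ε.symm : Module.Dual F ↥V →ₗ[F] Shrink.{w} (Module.Dual F ↥V))
        = Module.Dual.eval F ↥V ⟨f, hf⟩ := by
      ext lam
      simp
    rw [hcomp, evalTensor_eval, hη a]
    rfl

end reverse

/-- A subspace `V ⊆ Hom_F(A,B)` is the cosupport of some linear map `ρ : A → B ⊗ Q`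
if and only if `V` is pointwise finite dimensional and closed in the finite topology. -/
theorem dualizable_iff_pointwiseFD_and_closed (V : Submodule F (A →ₗ[F] B)) :
    (∃ (Q : ModuleCat.{max uA uB} F) (ρ : A →ₗ[F] B ⊗[F] Q), lcosupp ρ = V) ↔
      ((∀ a : A,
          FiniteDimensional F (V.map ((LinearMap.applyₗ : A →ₗ[F] (A →ₗ[F] B) →ₗ[F] B) a))) ∧
        @IsClosed _ (finiteTopology F A B) (V : Set (A →ₗ[F] B))) := by
  constructor
  · rintro ⟨Q, ρ, rfl⟩
    exact ⟨fun a => lcosupp_fd ρ a, lcosupp_closed ρ⟩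
  · rintro ⟨hfd, hcl⟩
    haveI : Small.{max uA uB} (Module.Dual F ↥V) := by
      by_cases hA : ∃ a : A, a ≠ 0
      · obtain ⟨a₀, ha₀⟩ := hA
        haveI : Small.{max uA uB} A := small_lift.{uA, uB} A
        haveI : Small.{max uA uB} F :=
          small_of_injective (f := fun c : F => c • a₀) (smul_left_injective F ha₀)
        exact small_of_injective (f := fun q : Module.Dual F ↥V => (q : ↥V → F))
          DFunLike.coe_injective
      · push_neg at hA
        haveI : Subsingleton (A →ₗ[F] B) :=
          ⟨fun f g => by ext a; rw [hA a]; simp⟩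
        haveI : Subsingleton ↥V := ⟨fun v w => Subtype.ext (Subsingleton.elim _ _)⟩
        haveI : Subsingleton (Module.Dual F ↥V) :=
          ⟨fun f g => by ext v; rw [Subsingleton.elim v 0]; simp⟩
        infer_instance
    obtain ⟨ρ, hρ⟩ := exists_lcosupp_eq V hfd hcl
    exact ⟨ModuleCat.of F (Shrink.{max uA uB} (Module.Dual F ↥V)), ρ, hρ⟩
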